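/- There exists a constant C > 0 such that for every ν > 0, every a ∈ [0,4], every integer k with k ≠ 0, all real numbers η and l, and every t ≥ 1, one has exp(−ν ∫₁^t (2π)² (k² + (η − k s)² + l²) ds) ≤ C · exp(−(a+1) ν^{1/3} (t − 1)). -/

import Mathlib

open Real

lemma integral_val (k : ℝ) (hk : k ≠ 0) (η l t : ℝ) :
    (∫ s in (1:ℝ)..t, (2 * Real.pi) ^ 2 * (k ^ 2 + (η - k * s) ^ 2 + l ^ 2))
      = (2 * Real.pi) ^ 2 * ((k ^ 2 + l ^ 2) * (t - 1)
          + ((η - k) ^ 3 - (η - k * t) ^ 3) / (3 * k)) := by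
  have hderiv : ∀ s ∈ Set.uIcc (1:ℝ) t,
      HasDerivAt (fun s => (2 * Real.pi) ^ 2 * ((k ^ 2 + l ^ 2) * s - (η - k * s) ^ 3 / (3 * k)))
        ((2 * Real.pi) ^ 2 * (k ^ 2 + (η - k * s) ^ 2 + l ^ 2)) s := by
    intro s _
    have h1 : HasDerivAt (fun s : ℝ => η - k * s) (-k) s := by
      exact ((hasDerivAt_const s η).sub ((hasDerivAt_id s).const_mul k)).congr_deriv (by simp)
    have h2 := (h1.pow 3).div_const (3 * k)
    have h3 := ((hasDerivAt_id s).const_mul (k ^ 2 + l ^ 2)).sub h2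
    have h4 := h3.const_mul ((2 * Real.pi) ^ 2)
    refine h4.congr_deriv ?_
    field_simp
    ring
  have hint : IntervalIntegrable
      (fun s => (2 * Real.pi) ^ 2 * (k ^ 2 + (η - k * s) ^ 2 + l ^ 2))
      MeasureTheory.volume 1 t := by
    apply Continuous.intervalIntegrable
    continuity
  rw [intervalIntegral.integral_eq_sub_of_hasDerivAt hderiv hint]
  ring
lemma integral_lb (k : ℝ) (hk : 1 ≤ k ^ 2) (hk0 : k ≠ 0) (η l t : ℝ) (ht : 1 ≤ t) :
    Real.pi ^ 2 / 3 * (t - 1) ^ 3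
      ≤ ∫ s in (1:ℝ)..t, (2 * Real.pi) ^ 2 * (k ^ 2 + (η - k * s) ^ 2 + l ^ 2) := by
  rw [integral_val k hk0 η l t]
  have ht1 : 0 ≤ t - 1 := by linarith
  have hfac : ((η - k) ^ 3 - (η - k * t) ^ 3) / (3 * k)
      = (t - 1) * ((η - k) ^ 2 + (η - k) * (η - k * t) + (η - k * t) ^ 2) / 3 := by
    rw [show (η - k) ^ 3 - (η - k * t) ^ 3
        = (k * (t - 1)) * ((η - k) ^ 2 + (η - k) * (η - k * t) + (η - k * t) ^ 2) by ring]
    field_simp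
  rw [hfac]
  have hq : (t - 1) ^ 3
      ≤ 4 * ((t - 1) * ((η - k) ^ 2 + (η - k) * (η - k * t) + (η - k * t) ^ 2)) := by
    nlinarith [mul_nonneg ht1 (sq_nonneg ((η - k) + (η - k * t))),
      mul_nonneg (pow_nonneg ht1 3) (by linarith : (0:ℝ) ≤ k ^ 2 - 1)]
  have h0 : 0 ≤ (k ^ 2 + l ^ 2) * (t - 1) := mul_nonneg (by positivity) ht1
  have hX : (t - 1) ^ 3 / 12 ≤ (k ^ 2 + l ^ 2) * (t - 1)
      + (t - 1) * ((η - k) ^ 2 + (η - k) * (η - k * t) + (η - k * t) ^ 2) / 3 := by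
    linarith
  have hmul := mul_le_mul_of_nonneg_left hX (by positivity : (0:ℝ) ≤ (2 * Real.pi) ^ 2)
  nlinarith [hmul]

theorem stmt4 : ∃ C : ℝ, 0 < C ∧ ∀ (ν a : ℝ) (k : ℤ) (l η t : ℝ),
    0 < ν → 0 ≤ a → a ≤ 4 → k ≠ 0 → 1 ≤ t →
    Real.exp (-(ν * ∫ s in (1:ℝ)..t,
        (2 * Real.pi) ^ 2 * ((k : ℝ) ^ 2 + (η - (k : ℝ) * s) ^ 2 + l ^ 2)))
      ≤ C * Real.exp (-((a + 1) * ν ^ ((1:ℝ)/3) * (t - 1))) := by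
  refine ⟨Real.exp 10, Real.exp_pos 10, ?_⟩
  intro ν a k l η t hν ha0 ha4 hk ht
  have hk2 : (1:ℝ) ≤ (k:ℝ) ^ 2 := by
    have h1 : (1:ℤ) ≤ k ^ 2 := by
      rcases lt_or_gt_of_ne hk with h | h <;> nlinarith
    exact_mod_cast h1
  have hk0 : (k:ℝ) ≠ 0 := Int.cast_ne_zero.mpr hk
  obtain ⟨J, hJdef⟩ : ∃ J, J = ∫ s in (1:ℝ)..t,
      (2 * Real.pi) ^ 2 * ((k : ℝ) ^ 2 + (η - (k : ℝ) * s) ^ 2 + l ^ 2) := ⟨_, rfl⟩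
  obtain ⟨y, hydef⟩ : ∃ y, y = ν ^ ((1:ℝ)/3) := ⟨_, rfl⟩
  rw [← hJdef, ← hydef]
  have hJ : Real.pi ^ 2 / 3 * (t - 1) ^ 3 ≤ J := by
    rw [hJdef]; exact integral_lb _ hk2 hk0 η l t ht
  have hx : 0 ≤ t - 1 := by linarith
  have hy : 0 < y := hydef ▸ Real.rpow_pos_of_pos hν _
  have hy3 : y ^ 3 = ν := by
    rw [hydef, ← Real.rpow_natCast (ν ^ ((1:ℝ)/3)) 3, ← Real.rpow_mul hν.le]
    norm_num
  have hpi : 3 < Real.pi := Real.pi_gt_three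
  have hJ0 : 0 ≤ J := le_trans (by positivity) hJ
  by_cases hcase : y * (t - 1) ≤ 2
  · have h1 : Real.exp (-(ν * J)) ≤ 1 := by
      rw [Real.exp_le_one_iff]
      nlinarith [mul_nonneg hν.le hJ0]
    have h2 : (1:ℝ) ≤ Real.exp 10 * Real.exp (-((a + 1) * y * (t - 1))) := by
      rw [← Real.exp_add]
      apply Real.one_le_exp
      have h3 : (a + 1) * (y * (t - 1)) ≤ 5 * 2 :=
        mul_le_mul (by linarith) hcase (mul_nonneg hy.le hx) (by norm_num)
      nlinarith [h3]
    linarith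
  · push_neg at hcase
    have hyx : 2 ≤ y * (t - 1) := hcase.le
    have hkey : (a + 1) * y * (t - 1) ≤ ν * J := by
      have h1 : ν * (Real.pi ^ 2 / 3 * (t - 1) ^ 3) ≤ ν * J :=
        mul_le_mul_of_nonneg_left hJ hν.le
      have hyx0 : 0 ≤ y * (t - 1) := mul_nonneg hy.le hx
      have h2 : 3 * (y * (t - 1)) ^ 3 ≤ ν * (Real.pi ^ 2 / 3 * (t - 1) ^ 3) := by
        have h3 : ν * (t - 1) ^ 3 = (y * (t - 1)) ^ 3 := by rw [← hy3]; ring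
        have hpi9 : (9:ℝ) ≤ Real.pi ^ 2 := by nlinarith [hpi]
        nlinarith [mul_nonneg (by linarith : (0:ℝ) ≤ Real.pi ^ 2 / 3 - 3)
          (mul_nonneg hν.le (pow_nonneg hx 3)), h3]
      have h3 : (a + 1) * y * (t - 1) ≤ 3 * (y * (t - 1)) ^ 3 := by
        nlinarith [mul_nonneg (mul_nonneg hyx0 (by linarith : (0:ℝ) ≤ y * (t - 1) - 2))
          (by linarith : (0:ℝ) ≤ y * (t - 1) + 2),
          mul_nonneg (by linarith : (0:ℝ) ≤ 5 - (a + 1)) hyx0]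
      linarith
    have h4 : Real.exp (-(ν * J)) ≤ Real.exp (-((a + 1) * y * (t - 1))) := by
      apply Real.exp_le_exp.mpr; linarith
    have h5 : Real.exp (-((a + 1) * y * (t - 1)))
        ≤ Real.exp 10 * Real.exp (-((a + 1) * y * (t - 1))) := by
      nlinarith [Real.exp_pos (-((a + 1) * y * (t - 1))),
        Real.one_le_exp (by norm_num : (0:ℝ) ≤ 10)]
    linarith
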